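/- Let H be a real Hilbert space, let φ_1, …, φ_m ∈ H with m ≥ 1, y ∈ ℝ^m, λ > 0, τ > 0, and define F(w, b) = (λ/2)·‖w‖² + (1/m)·Σ_{i=1}^m L_τ(y_i − ⟨w, φ_i⟩ − b). Then there exist coefficients α ∈ ℝ^m and a bias b* ∈ ℝ such that the pair (Σ_{i=1}^m α_i·φ_i, b*) is a global minimizer of F; that is, F(Σ_i α_i·φ_i, b*) ≤ F(w, b) for all w ∈ H and all b ∈ ℝ. -/

import Mathlib

set_option maxHeartbeats 1000000 in
/-- Representer theorem for R-LSSVM: let H be a real Hilbert space,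
    φ_1, …, φ_m ∈ H with m ≥ 1, y ∈ ℝ^m, λ > 0, τ > 0, and
    F(w, b) = (λ/2)·‖w‖² + (1/m)·Σ_i L_τ(y_i − ⟨w, φ_i⟩ − b) with
    L_τ(ξ) = (1/2)·min(ξ², τ²).  Then there exist α ∈ ℝ^m and b* ∈ ℝ such that
    (Σ_i α_i·φ_i, b*) is a global minimizer of F. -/
theorem rlssvm_representer_global_minimizer
    {H : Type*} [NormedAddCommGroup H] [InnerProductSpace ℝ H] [CompleteSpace H]
    (m : ℕ) (hm : 1 ≤ m) (φ : Fin m → H) (y : Fin m → ℝ)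
    (lam τ : ℝ) (hlam : 0 < lam) (hτ : 0 < τ)
    (F : H → ℝ → ℝ)
    (hF : F = fun w b => lam / 2 * ‖w‖ ^ 2
      + 1 / m * ∑ i, 1 / 2 * min ((y i - (inner ℝ w (φ i) : ℝ) - b) ^ 2) (τ ^ 2)) :
    ∃ (α : Fin m → ℝ) (bstar : ℝ),
      ∀ (w : H) (b : ℝ), F (∑ i, α i • φ i) bstar ≤ F w b := by
  have hm' : (0 : ℝ) < m := by exact_mod_cast Nat.lt_of_lt_of_le Nat.zero_lt_one hm
  have hτ2 : (0 : ℝ) < τ ^ 2 / 2 := by positivity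
  -- basic positivity facts about the loss
  have hterm_nonneg : ∀ (w : H) (b : ℝ) (i : Fin m),
      0 ≤ 1 / 2 * min ((y i - (inner ℝ w (φ i) : ℝ) - b) ^ 2) (τ ^ 2) := by
    intro w b i
    have : (0:ℝ) ≤ min ((y i - (inner ℝ w (φ i) : ℝ) - b) ^ 2) (τ ^ 2) :=
      le_min (sq_nonneg _) (sq_nonneg _)
    linarith
  have hsum_nonneg : ∀ (w : H) (b : ℝ),
      0 ≤ ∑ i, 1 / 2 * min ((y i - (inner ℝ w (φ i) : ℝ) - b) ^ 2) (τ ^ 2) := by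
    intro w b; exact Finset.sum_nonneg fun i _ => hterm_nonneg w b i
  have hF_ge : ∀ (w : H) (b : ℝ), lam / 2 * ‖w‖ ^ 2 ≤ F w b := by
    intro w b; rw [hF]
    have := hsum_nonneg w b
    have h1m : (0:ℝ) ≤ 1 / m := by positivity
    nlinarith [mul_nonneg h1m this]
  have hF_ge' : ∀ (w : H) (b : ℝ),
      1 / m * ∑ i, 1 / 2 * min ((y i - (inner ℝ w (φ i) : ℝ) - b) ^ 2) (τ ^ 2) ≤ F w b := by
    intro w b; rw [hF]
    nlinarith [sq_nonneg ‖w‖, mul_nonneg (le_of_lt hlam) (sq_nonneg ‖w‖)]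
  set i0 : Fin m := ⟨0, hm⟩ with hi0
  set M : ℝ := F 0 (y i0) with hM
  have hM_nonneg : 0 ≤ M := by
    have := hF_ge 0 (y i0)
    simp only [norm_zero] at this
    nlinarith
  -- M < τ²/2
  have hMlt : M < τ ^ 2 / 2 := by
    have hterm_le : ∀ i : Fin m,
        1 / 2 * min ((y i - (inner ℝ (0:H) (φ i) : ℝ) - y i0) ^ 2) (τ ^ 2) ≤ τ ^ 2 / 2 := by
      intro i
      have := min_le_right ((y i - (inner ℝ (0:H) (φ i) : ℝ) - y i0) ^ 2) (τ ^ 2)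
      linarith
    have h0 : 1 / 2 * min ((y i0 - (inner ℝ (0:H) (φ i0) : ℝ) - y i0) ^ 2) (τ ^ 2) = 0 := by
      simp only [inner_zero_left, sub_zero, sub_self]
      norm_num [min_eq_left (sq_nonneg τ)]
    have hsum : ∑ i, 1 / 2 * min ((y i - (inner ℝ (0:H) (φ i) : ℝ) - y i0) ^ 2) (τ ^ 2)
        ≤ (m - 1) * (τ ^ 2 / 2) := by
      rw [← Finset.sum_erase_add _ _ (Finset.mem_univ i0), h0, add_zero]
      calc ∑ i ∈ Finset.univ.erase i0,
            1 / 2 * min ((y i - (inner ℝ (0:H) (φ i) : ℝ) - y i0) ^ 2) (τ ^ 2)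
          ≤ ∑ _i ∈ Finset.univ.erase i0, (τ ^ 2 / 2) :=
            Finset.sum_le_sum fun i _ => hterm_le i
        _ = ((Finset.univ.erase i0).card : ℝ) * (τ ^ 2 / 2) := by
            rw [Finset.sum_const, nsmul_eq_mul]
        _ = ((m - 1 : ℕ) : ℝ) * (τ ^ 2 / 2) := by
            rw [Finset.card_erase_of_mem (Finset.mem_univ i0), Finset.card_univ, Fintype.card_fin]
        _ ≤ (m - 1) * (τ ^ 2 / 2) := by
            have : ((m - 1 : ℕ) : ℝ) ≤ (m : ℝ) - 1 := by
              rw [Nat.cast_sub hm]; simp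
            nlinarith
    have hMeq : M = 1 / m * ∑ i, 1 / 2 * min ((y i - (inner ℝ (0:H) (φ i) : ℝ) - y i0) ^ 2) (τ ^ 2) := by
      rw [hM, hF]; simp
    rw [hMeq]
    have : 1 / (m:ℝ) * ((m - 1) * (τ ^ 2 / 2)) < τ ^ 2 / 2 := by
      rw [div_mul_eq_mul_div, one_mul, div_lt_iff₀ hm']
      nlinarith
    calc 1 / (m:ℝ) * ∑ i, 1 / 2 * min ((y i - (inner ℝ (0:H) (φ i) : ℝ) - y i0) ^ 2) (τ ^ 2)
        ≤ 1 / (m:ℝ) * ((m - 1) * (τ ^ 2 / 2)) := by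
          apply mul_le_mul_of_nonneg_left hsum (by positivity)
      _ < τ ^ 2 / 2 := this
  -- constants
  set Y : ℝ := ∑ i, |y i| with hY
  set Φ : ℝ := ∑ i, ‖φ i‖ with hΦ
  have hY_nonneg : 0 ≤ Y := Finset.sum_nonneg fun i _ => abs_nonneg _
  have hΦ_nonneg : 0 ≤ Φ := Finset.sum_nonneg fun i _ => norm_nonneg _
  set R : ℝ := Real.sqrt (2 * M / lam) with hR
  have hR_nonneg : 0 ≤ R := Real.sqrt_nonneg _
  set B : ℝ := Y + R * Φ + τ with hB
  -- key coercivity lemma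
  have key : ∀ (w : H) (b : ℝ), F w b ≤ M → ‖w‖ ≤ R ∧ |b| ≤ B := by
    intro w b hwb
    have hnw : ‖w‖ ≤ R := by
      apply Real.le_sqrt_of_sq_le
      have := hF_ge w b
      rw [le_div_iff₀ hlam]
      nlinarith
    refine ⟨hnw, ?_⟩
    -- some residual is below τ
    have hex : ∃ i : Fin m, (y i - (inner ℝ w (φ i) : ℝ) - b) ^ 2 < τ ^ 2 := by
      by_contra hc
      push_neg at hc
      have hall : ∀ i : Fin m,
          1 / 2 * min ((y i - (inner ℝ w (φ i) : ℝ) - b) ^ 2) (τ ^ 2) = τ ^ 2 / 2 := by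
        intro i
        rw [min_eq_right (hc i)]; ring
      have hsum : ∑ i, 1 / 2 * min ((y i - (inner ℝ w (φ i) : ℝ) - b) ^ 2) (τ ^ 2)
          = m * (τ ^ 2 / 2) := by
        rw [Finset.sum_congr rfl fun i _ => hall i]
        rw [Finset.sum_const, nsmul_eq_mul, Finset.card_univ, Fintype.card_fin]
      have := hF_ge' w b
      rw [hsum] at this
      have heq : 1 / (m:ℝ) * ((m:ℝ) * (τ ^ 2 / 2)) = τ ^ 2 / 2 := by
        field_simp
      rw [heq] at this
      linarith
    obtain ⟨i, hi⟩ := hex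
    have habs : |y i - (inner ℝ w (φ i) : ℝ) - b| < τ := by
      exact abs_lt_of_sq_lt_sq hi (le_of_lt hτ)
    have hyi : |y i| ≤ Y := by
      rw [hY]
      exact Finset.single_le_sum (fun j _ => abs_nonneg (y j)) (Finset.mem_univ i)
    have hφi : ‖φ i‖ ≤ Φ := by
      rw [hΦ]
      exact Finset.single_le_sum (fun j _ => norm_nonneg (φ j)) (Finset.mem_univ i)
    have hinn : |(inner ℝ w (φ i) : ℝ)| ≤ R * Φ := by
      calc |(inner ℝ w (φ i) : ℝ)| ≤ ‖w‖ * ‖φ i‖ := abs_real_inner_le_norm w (φ i)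
        _ ≤ R * Φ := mul_le_mul hnw hφi (norm_nonneg _) hR_nonneg
    rw [abs_le] at *
    rw [abs_lt] at habs
    constructor <;> [skip; skip] <;> · simp only [hB]; linarith [habs.1, habs.2, hyi.1, hyi.2, hinn.1, hinn.2]
  -- the finite-dimensional subspace
  set V : Submodule ℝ H := Submodule.span ℝ (Set.range φ) with hV
  haveI : FiniteDimensional ℝ V := FiniteDimensional.span_of_finite ℝ (Set.finite_range φ)
  set g : V × ℝ → ℝ := fun p => F (p.1 : H) p.2 with hg
  have hg_cont : Continuous g := by
    rw [hg, hF]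
    apply Continuous.add
    · exact (continuous_const.mul (((continuous_subtype_val.comp continuous_fst).norm).pow 2))
    · apply continuous_const.mul
      apply continuous_finset_sum
      intro i _
      apply continuous_const.mul
      apply Continuous.min _ continuous_const
      apply Continuous.pow
      apply Continuous.sub
      apply Continuous.sub continuous_const
      · exact Continuous.inner (continuous_subtype_val.comp continuous_fst) continuous_const
      · exact continuous_snd
  set K : Set (V × ℝ) := Metric.closedBall (0 : V) R ×ˢ Set.Icc (-B) B with hK
  have hK_compact : IsCompact K := (isCompact_closedBall _ _).prod isCompact_Icc
  have hp0 : ((0 : V), y i0) ∈ K := by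
    constructor
    · simpa using hR_nonneg
    · simp only [Set.mem_Icc]
      have : |y i0| ≤ Y :=
        Finset.single_le_sum (fun j _ => abs_nonneg (y j)) (Finset.mem_univ i0)
      rw [abs_le] at this
      constructor <;> · simp only [hB]; nlinarith [mul_nonneg hR_nonneg hΦ_nonneg, this.1, this.2]
  obtain ⟨p, hpK, hpmin⟩ := hK_compact.exists_isMinOn ⟨_, hp0⟩ hg_cont.continuousOn
  have hgp0 : g ((0 : V), y i0) = M := by
    simp only [hg, hM, Submodule.coe_zero]
  obtain ⟨α, hα⟩ := (Submodule.mem_span_range_iff_exists_fun ℝ).mp p.1.2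
  refine ⟨α, p.2, ?_⟩
  intro w b
  rw [hα]
  -- orthogonal projection
  set Pw : V := Submodule.orthogonalProjectionOnto V w with hPw
  have hinner : ∀ i : Fin m, (inner ℝ (Pw : H) (φ i) : ℝ) = inner ℝ w (φ i) := by
    intro i
    have hmem : φ i ∈ V := Submodule.subset_span ⟨i, rfl⟩
    have h0 := V.starProjection_inner_eq_zero w (φ i) hmem
    rw [inner_sub_left, sub_eq_zero] at h0
    exact h0.symm
  have hnormP : ‖(Pw : H)‖ ≤ ‖w‖ := by
    calc ‖(Pw : H)‖ = ‖Submodule.orthogonalProjectionOnto V w‖ := rfl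
      _ ≤ ‖Submodule.orthogonalProjectionOnto V‖ * ‖w‖ := (Submodule.orthogonalProjectionOnto V).le_opNorm w
      _ ≤ 1 * ‖w‖ := mul_le_mul_of_nonneg_right (Submodule.orthogonalProjectionOnto_norm_le V) (norm_nonneg w)
      _ = ‖w‖ := one_mul _
  have hFP : F (Pw : H) b ≤ F w b := by
    rw [hF]
    have hsumeq : ∑ i, 1 / 2 * min ((y i - (inner ℝ (Pw : H) (φ i) : ℝ) - b) ^ 2) (τ ^ 2)
        = ∑ i, 1 / 2 * min ((y i - (inner ℝ w (φ i) : ℝ) - b) ^ 2) (τ ^ 2) := by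
      apply Finset.sum_congr rfl
      intro i _
      rw [hinner i]
    simp only [hsumeq]
    have : lam / 2 * ‖(Pw : H)‖ ^ 2 ≤ lam / 2 * ‖w‖ ^ 2 := by
      apply mul_le_mul_of_nonneg_left _ (by positivity)
      exact pow_le_pow_left₀ (norm_nonneg _) hnormP 2
    linarith
  by_cases hcase : F (Pw : H) b ≤ M
  · obtain ⟨h1, h2⟩ := key (Pw : H) b hcase
    have hmemK : (Pw, b) ∈ K := by
      constructor
      · simp only [Metric.mem_closedBall, dist_zero_right]
        exact h1
      · rwa [Set.mem_Icc, ← abs_le]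
    calc F (p.1 : H) p.2 = g p := rfl
      _ ≤ g (Pw, b) := hpmin hmemK
      _ = F (Pw : H) b := rfl
      _ ≤ F w b := hFP
  · push_neg at hcase
    calc F (p.1 : H) p.2 = g p := rfl
      _ ≤ g ((0 : V), y i0) := hpmin hp0
      _ = M := hgp0
      _ ≤ F (Pw : H) b := le_of_lt hcase
      _ ≤ F w b := hFP
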